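/- Reduction from memoryless to fair algorithms: let G^× = G_1 × ⋯ × G_k be a direct product of plain games and let A be any (T_1,…,T_k)-memoryless algorithm for G^×. Then there exists a (T_1,…,T_k)-fair algorithm B for G^× whose winning probability is at least the winning probability of A. -/

import Mathlib

open scoped ENNReal BigOperators

noncomputable section

/-- `{0,1}`-valued indicator of a proposition, in `ℝ≥0∞`. -/
def ind (p : Prop) : ℝ≥0∞ :=
  haveI := Classical.propDecidable p
  if p then 1 else 0

/-- Deterministic oracle algorithms making at most `T` queries, modeled as decision
trees of depth at most `T`: a query is an element `q : Q`, the oracle's answer to `q`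
has type `Ans q`, and the final output has type `O`. -/
inductive DT (Q : Type) (Ans : Q → Type) (O : Type) : ℕ → Type
  | ret {T : ℕ} (o : O) : DT Q Ans O T
  | query {T : ℕ} (q : Q) (cont : Ans q → DT Q Ans O T) : DT Q Ans O (T + 1)

/-- Run a decision tree against an oracle. -/
def DT.run {Q : Type} {Ans : Q → Type} {O : Type} :
    {T : ℕ} → DT Q Ans O T → ((q : Q) → Ans q) → O
  | _, DT.ret o, _ => o
  | _, DT.query q cont, f => DT.run (cont (f q)) f

/-- The number of queries satisfying `p` made along the execution path on oracle `f`. -/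
def DT.countP {Q : Type} {Ans : Q → Type} {O : Type} (p : Q → Prop) :
    {T : ℕ} → DT Q Ans O T → ((q : Q) → Ans q) → ℕ
  | _, DT.ret _, _ => 0
  | _, DT.query q cont, f =>
      (haveI := Classical.propDecidable (p q); if p q then 1 else 0)
        + DT.countP p (cont (f q)) f

/-- A (single-challenge) game: an oracle distribution `μ` over functions
`Fin M → Fin N`, a challenge distribution `π f` for each oracle `f`, and an
accepting outcome set `R f ch` for each oracle and challenge. -/
structure Game where
  M : ℕ
  N : ℕ
  hM : 0 < M
  hN : 0 < N
  Ch : Type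
  chFin : Fintype Ch
  Out : Type
  μ : PMF (Fin M → Fin N)
  π : (Fin M → Fin N) → PMF Ch
  R : (Fin M → Fin N) → Ch → Set Out

attribute [instance] Game.chFin

namespace Game

variable (G : Game)

/-- Winning probability of a deterministic `T`-query algorithm (taking the challenge
as classical input) for the game `G`. -/
def detWinProb {T : ℕ} (a : G.Ch → DT (Fin G.M) (fun _ => Fin G.N) G.Out T) : ℝ≥0∞ :=
  ∑' f : Fin G.M → Fin G.N, G.μ f * ∑' ch : G.Ch, G.π f ch * ind ((a ch).run f ∈ G.R f ch)

/-- Uniform security `ε_G(T)`: the supremum, over randomized `T`-query algorithms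
(probability distributions over deterministic ones), of the winning probability. -/
def unifSec (T : ℕ) : ℝ≥0∞ :=
  ⨆ A : PMF (G.Ch → DT (Fin G.M) (fun _ => Fin G.N) G.Out T),
    ∑' a, A a * G.detWinProb a

/-- Winning probability, in the salted game `G_K`, of a non-uniform algorithm:
a randomized `T`-query algorithm `A` receiving `S` bits of advice together with the
salt and challenge, and an advice function `adv` mapping the joint oracle to `S` bits.
The joint oracle consists of `K` i.i.d. copies `g 0, …, g (K-1)` of the oracle of `G`,
the salt `k` is uniform on `Fin K` and the challenge is drawn from `π (g k)`. -/
def saltedWinProb (K S T : ℕ)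
    (A : PMF ((Fin S → Bool) × Fin K × G.Ch →
      DT (Fin K × Fin G.M) (fun _ => Fin G.N) G.Out T))
    (adv : (Fin K → Fin G.M → Fin G.N) → Fin S → Bool) : ℝ≥0∞ :=
  ∑' g : Fin K → Fin G.M → Fin G.N,
    (∏ k, G.μ (g k)) *
      ((K : ℝ≥0∞)⁻¹ *
        ∑' k : Fin K, ∑' ch : G.Ch, G.π (g k) ch *
          ∑' a, A a *
            ind ((a (adv g, k, ch)).run (fun q => g q.1 q.2) ∈ G.R (g k) ch))

/-- Non-uniform security `ε_{G_K}(S,T)` of the salted game `G_K`: the supremum of the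
winning probability over all non-uniform `(S,T)`-algorithms `(A, adv)`. -/
def saltedNonunifSec (K S T : ℕ) : ℝ≥0∞ :=
  ⨆ (A : PMF ((Fin S → Bool) × Fin K × G.Ch →
      DT (Fin K × Fin G.M) (fun _ => Fin G.N) G.Out T))
    (adv : (Fin K → Fin G.M → Fin G.N) → Fin S → Bool),
    G.saltedWinProb K S T A adv

/-- The marginal probability of a challenge `ch` (for `f ∼ μ`, `ch ∼ π f`). -/
def chProb (ch : G.Ch) : ℝ≥0∞ := ∑' f : Fin G.M → Fin G.N, G.μ f * G.π f ch

/-- The oracle distribution `μ_ch` conditioned on the drawn challenge being `ch`. -/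
def condDist (ch : G.Ch) (f : Fin G.M → Fin G.N) : ℝ≥0∞ :=
  G.μ f * G.π f ch / G.chProb ch

/-- Uniform security `ε_{G_ch}(T)` of the challenge-conditioned plain game `G_ch`:
the supremum over randomized `T`-query algorithms of the probability, for
`f ∼ μ_ch`, that the output lies in `R f ch`. -/
def condSec (ch : G.Ch) (T : ℕ) : ℝ≥0∞ :=
  ⨆ A : PMF (DT (Fin G.M) (fun _ => Fin G.N) G.Out T),
    ∑' a, A a * ∑' f : Fin G.M → Fin G.N, G.condDist ch f * ind (a.run f ∈ G.R f ch)

/-- Uniform security `ε_{G^n}(T')` of the multi-challenge game `G^n`: `n` i.i.d.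
challenges are drawn from `π f` and the algorithm must answer all of them. -/
def multiSec (n T' : ℕ) : ℝ≥0∞ :=
  ⨆ A : PMF ((Fin n → G.Ch) → DT (Fin G.M) (fun _ => Fin G.N) (Fin n → G.Out) T'),
    ∑' a, A a * ∑' f : Fin G.M → Fin G.N, G.μ f *
      ∑' chs : Fin n → G.Ch,
        (∏ j, G.π f (chs j)) * ind (∀ j, (a chs).run f j ∈ G.R f (chs j))

end Game

/-- A plain game: a game without challenges. -/
structure PlainGame where
  M : ℕ
  N : ℕ
  hM : 0 < M
  hN : 0 < N
  Out : Type
  μ : PMF (Fin M → Fin N)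
  R : (Fin M → Fin N) → Set Out

namespace PlainGame

/-- Uniform security `ε_G(T)` of a plain game. -/
def unifSec (G : PlainGame) (T : ℕ) : ℝ≥0∞ :=
  ⨆ A : PMF (DT (Fin G.M) (fun _ => Fin G.N) G.Out T),
    ∑' a, A a * ∑' f : Fin G.M → Fin G.N, G.μ f * ind (a.run f ∈ G.R f)

end PlainGame

/-- Query domain for joint oracle access to the oracles of `k` plain games:
each query is addressed to one of the oracles. -/
abbrev ProdQ {k : ℕ} (Gs : Fin k → PlainGame) : Type := (i : Fin k) × Fin (Gs i).M

/-- Answer type for queries in the direct product. -/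
abbrev ProdAns {k : ℕ} (Gs : Fin k → PlainGame) : ProdQ Gs → Type :=
  fun q => Fin (Gs q.1).N

/-- The joint oracle `(f 0, …, f (k-1))` as a single oracle function. -/
def jointOracle {k : ℕ} {Gs : Fin k → PlainGame}
    (f : (i : Fin k) → Fin (Gs i).M → Fin (Gs i).N) : (q : ProdQ Gs) → ProdAns Gs q :=
  fun q => f q.1 q.2

/-- Winning probability of a `(T 0, …, T (k-1))`-memoryless algorithm, given by
deterministic algorithms `A i` (each making at most `T i` queries and each with
joint oracle access) run sequentially with no shared memory; the oracles are drawn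
independently, and the algorithm wins if every output `(A i).run` is accepted. -/
def memorylessWinProb {k : ℕ} (Gs : Fin k → PlainGame) {T : Fin k → ℕ}
    (A : (i : Fin k) → DT (ProdQ Gs) (ProdAns Gs) (Gs i).Out (T i)) : ℝ≥0∞ :=
  ∑' f : (i : Fin k) → Fin (Gs i).M → Fin (Gs i).N,
    (∏ i, (Gs i).μ (f i)) * ind (∀ i, (A i).run (jointOracle f) ∈ (Gs i).R (f i))

/-- Winning probability of a deterministic algorithm with joint oracle access
outputting a tuple `(e 0, …, e (k-1))` for the direct product game. -/
def jointWinProb {k : ℕ} (Gs : Fin k → PlainGame) {B : ℕ}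
    (A : DT (ProdQ Gs) (ProdAns Gs) ((i : Fin k) → (Gs i).Out) B) : ℝ≥0∞ :=
  ∑' f : (i : Fin k) → Fin (Gs i).M → Fin (Gs i).N,
    (∏ i, (Gs i).μ (f i)) * ind (∀ i, A.run (jointOracle f) i ∈ (Gs i).R (f i))

/-- A deterministic algorithm is `(T 0, …, T (k-1))`-fair if in every execution it
makes at most `T i` queries to the `i`-th oracle. -/
def IsFair {k : ℕ} {Gs : Fin k → PlainGame} {O : Type} {B : ℕ} (T : Fin k → ℕ)
    (A : DT (ProdQ Gs) (ProdAns Gs) O B) : Prop :=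
  ∀ (f : (i : Fin k) → Fin (Gs i).M → Fin (Gs i).N) (i : Fin k),
    A.countP (fun q => q.1 = i) (jointOracle f) ≤ T i

end

set_option linter.unusedSectionVars false

noncomputable section

/-! ### indicator lemmas -/

lemma ind_of {p : Prop} (h : p) : ind p = 1 := by
  unfold ind; split <;> simp_all

lemma ind_of_not {p : Prop} (h : ¬ p) : ind p = 0 := by
  unfold ind; split <;> simp_all

lemma ind_le_one (p : Prop) : ind p ≤ 1 := by
  unfold ind; split <;> simp

lemma ind_forall {ι : Type*} [Fintype ι] (p : ι → Prop) :
    ind (∀ i, p i) = ∏ i, ind (p i) := by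
  by_cases h : ∀ i, p i
  · rw [ind_of h, Finset.prod_eq_one]
    intro i _; exact ind_of (h i)
  · rw [ind_of_not h]
    push_neg at h
    obtain ⟨i, hi⟩ := h
    exact (Finset.prod_eq_zero (Finset.mem_univ i) (ind_of_not hi)).symm

/-! ### Unindexed decision trees -/

inductive UT (Q : Type) (Ans : Q → Type) (O : Type) : Type
  | ret (o : O)
  | query (q : Q) (cont : Ans q → UT Q Ans O)

namespace UT

variable {Q : Type} {Ans : Q → Type} {O O' : Type}

def run : UT Q Ans O → ((q : Q) → Ans q) → O
  | .ret o, _ => o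
  | .query q c, f => (c (f q)).run f

def countP (p : Q → Prop) : UT Q Ans O → ((q : Q) → Ans q) → ℕ
  | .ret _, _ => 0
  | .query q c, f =>
      (haveI := Classical.propDecidable (p q); if p q then 1 else 0)
        + countP p (c (f q)) f

variable [∀ q, Fintype (Ans q)]

def depth : UT Q Ans O → ℕ
  | .ret _ => 0
  | .query _ c => (Finset.univ.sup fun a => (c a).depth) + 1

def size : UT Q Ans O → ℕ
  | .ret _ => 1
  | .query _ c => (∑ a, (c a).size) + 1

lemma size_pos (t : UT Q Ans O) : 0 < t.size := by
  cases t <;> simp [size]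

lemma size_cont_lt (q : Q) (c : Ans q → UT Q Ans O) (a : Ans q) :
    (c a).size < (UT.query q c).size := by
  have : (c a).size ≤ ∑ b, (c b).size :=
    Finset.single_le_sum (f := fun b => (c b).size) (fun b _ => Nat.zero_le _) (Finset.mem_univ a)
  simp only [size]; omega

lemma depth_cont_le (q : Q) (c : Ans q → UT Q Ans O) (a : Ans q) :
    (c a).depth + 1 ≤ (UT.query q c).depth := by
  have : (c a).depth ≤ Finset.univ.sup fun b => (c b).depth :=
    Finset.le_sup (f := fun b => (c b).depth) (Finset.mem_univ a)
  simp only [depth]; omega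

lemma countP_le_depth (p : Q → Prop) (t : UT Q Ans O) (f : (q : Q) → Ans q) :
    t.countP p f ≤ t.depth := by
  induction t with
  | ret o => simp [countP, depth]
  | query q c ih =>
    have h1 := ih (f q)
    have h2 := depth_cont_le q c (f q)
    simp only [countP]
    split <;> omega

end UT

/-! ### DT ↔ UT -/

namespace DT

variable {Q : Type} {Ans : Q → Type} {O : Type}

def toUT : {T : ℕ} → DT Q Ans O T → UT Q Ans O
  | _, .ret o => .ret o
  | _, .query q c => .query q (fun a => (c a).toUT)

lemma run_toUT {T : ℕ} (t : DT Q Ans O T) (f : (q : Q) → Ans q) :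
    t.toUT.run f = t.run f := by
  induction t with
  | ret o => rfl
  | query q c ih => simp [toUT, UT.run, run, ih]

lemma countP_toUT (p : Q → Prop) {T : ℕ} (t : DT Q Ans O T) (f : (q : Q) → Ans q) :
    t.toUT.countP p f = t.countP p f := by
  induction t with
  | ret o => rfl
  | query q c ih => simp [toUT, UT.countP, countP, ih]

variable [∀ q, Fintype (Ans q)]

lemma depth_toUT {T : ℕ} (t : DT Q Ans O T) : t.toUT.depth ≤ T := by
  induction t with
  | ret o => simp [toUT, UT.depth]
  | query q c ih =>
    simp only [toUT, UT.depth]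
    have : (Finset.univ.sup fun a => (c a).toUT.depth) ≤ _ :=
      Finset.sup_le (fun a _ => ih a)
    omega

end DT

namespace UT

variable {Q : Type} {Ans : Q → Type} {O O' : Type} [∀ q, Fintype (Ans q)]

def toDT : (t : UT Q Ans O) → (T : ℕ) → t.depth ≤ T → DT Q Ans O T
  | .ret o, _, _ => .ret o
  | .query q c, T, h =>
    match T, h with
    | T' + 1, h =>
      .query q (fun a => (c a).toDT T' (by
        have := depth_cont_le q c a
        omega))
    | 0, h => absurd h (by simp [depth])

lemma run_toDT (t : UT Q Ans O) (T : ℕ) (h : t.depth ≤ T) (f : (q : Q) → Ans q) :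
    (t.toDT T h).run f = t.run f := by
  induction t generalizing T with
  | ret o => cases T <;> rfl
  | query q c ih =>
    cases T with
    | zero => exact absurd h (by simp [depth])
    | succ T' => simp [toDT, DT.run, run, ih]

lemma countP_toDT (p : Q → Prop) (t : UT Q Ans O) (T : ℕ) (h : t.depth ≤ T)
    (f : (q : Q) → Ans q) :
    (t.toDT T h).countP p f = t.countP p f := by
  induction t generalizing T with
  | ret o => cases T <;> rfl
  | query q c ih =>
    cases T with
    | zero => exact absurd h (by simp [depth])
    | succ T' => simp [toDT, DT.countP, countP, ih]

/-! ### sequencing -/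

def seq : UT Q Ans O → (O → UT Q Ans O') → UT Q Ans O'
  | .ret o, k => k o
  | .query q c, k => .query q (fun a => (c a).seq k)

lemma run_seq (t : UT Q Ans O) (k : O → UT Q Ans O') (f : (q : Q) → Ans q) :
    (t.seq k).run f = (k (t.run f)).run f := by
  induction t with
  | ret o => rfl
  | query q c ih => simp [seq, run, ih]

lemma countP_seq (p : Q → Prop) (t : UT Q Ans O) (k : O → UT Q Ans O')
    (f : (q : Q) → Ans q) :
    (t.seq k).countP p f = t.countP p f + (k (t.run f)).countP p f := by
  induction t with
  | ret o => simp [seq, countP, run]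
  | query q c ih => simp [seq, countP, run, ih]; ring

end UT

noncomputable section
open Classical

namespace MF  -- memoryless-to-fair development

variable {k : ℕ} (Gs : Fin k → PlainGame)

abbrev Orc (i : Fin k) : Type := Fin (Gs i).M → Fin (Gs i).N

abbrev JT (i : Fin k) : Type := UT (ProdQ Gs) (ProdAns Gs) (Gs i).Out

abbrev OT (i : Fin k) : Type := UT (Fin (Gs i).M) (fun _ => Fin (Gs i).N) (Gs i).Out

/-- value of an own-oracle tree for game `i` with weight `w`. -/
def val (i : Fin k) (w : Orc Gs i → ℝ≥0∞) (C : OT Gs i) : ℝ≥0∞ :=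
  ∑ g : Orc Gs i, w g * ind (C.run g ∈ (Gs i).R g)

/-- weighted winning "probability" of the memoryless tuple `A`. -/
def lhs (w : (i : Fin k) → Orc Gs i → ℝ≥0∞) (A : (i : Fin k) → JT Gs i) : ℝ≥0∞ :=
  ∑ f : (i : Fin k) → Orc Gs i,
    (∏ j, w j (f j)) * ∏ i, ind ((A i).run (jointOracle f) ∈ (Gs i).R (f i))

/-- own-embedding of a single-oracle tree into the joint-query tree type. -/
def ownEmbed (i : Fin k) {O : Type} :
    UT (Fin (Gs i).M) (fun _ => Fin (Gs i).N) O → UT (ProdQ Gs) (ProdAns Gs) O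
  | .ret o => .ret o
  | .query x c => .query ⟨i, x⟩ (fun a => ownEmbed i (c a))

lemma run_ownEmbed (i : Fin k) {O : Type}
    (t : UT (Fin (Gs i).M) (fun _ => Fin (Gs i).N) O) (F : (q : ProdQ Gs) → ProdAns Gs q) :
    (ownEmbed Gs i t).run F = t.run (fun x => F ⟨i, x⟩) := by
  induction t with
  | ret o => rfl
  | query x c ih => simp [ownEmbed, UT.run, ih]

lemma countP_ownEmbed_ne (i i' : Fin k) (h : i ≠ i') {O : Type}
    (t : UT (Fin (Gs i).M) (fun _ => Fin (Gs i).N) O) (F : (q : ProdQ Gs) → ProdAns Gs q) :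
    (ownEmbed Gs i t).countP (fun q => q.1 = i') F = 0 := by
  induction t with
  | ret o => rfl
  | query x c ih => simpa [ownEmbed, UT.countP, h] using ih _

lemma countP_ownEmbed_le (i i' : Fin k) {O : Type}
    (t : UT (Fin (Gs i).M) (fun _ => Fin (Gs i).N) O) (F : (q : ProdQ Gs) → ProdAns Gs q) :
    (ownEmbed Gs i t).countP (fun q => q.1 = i') F ≤ t.depth := by
  induction t with
  | ret o => simp [ownEmbed, UT.countP, UT.depth]
  | query x c ih =>
    have h2 := UT.depth_cont_le (Ans := fun _ => Fin (Gs i).N) x c (F ⟨i, x⟩)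
    have h1 := ih (F ⟨i, x⟩)
    simp only [ownEmbed, UT.countP]
    split <;> omega


/-! ### sequential composition of own-oracle trees -/

def bigTree (C : (i : Fin k) → OT Gs i) :
    List (Fin k) → ((i : Fin k) → (Gs i).Out) →
      UT (ProdQ Gs) (ProdAns Gs) ((i : Fin k) → (Gs i).Out)
  | [], acc => .ret acc
  | i :: rest, acc =>
      (ownEmbed Gs i (C i)).seq (fun o => bigTree C rest (Function.update acc i o))

lemma run_bigTree (C : (i : Fin k) → OT Gs i) (l : List (Fin k))
    (acc : (i : Fin k) → (Gs i).Out) (F : (q : ProdQ Gs) → ProdAns Gs q) (i : Fin k) :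
    ((bigTree Gs C l acc).run F) i =
      if i ∈ l then (C i).run (fun x => F ⟨i, x⟩) else acc i := by
  induction l generalizing acc with
  | nil => simp [bigTree, UT.run]
  | cons j rest ih =>
    simp only [bigTree, UT.run_seq, run_ownEmbed, ih]
    by_cases hr : i ∈ rest
    · simp [hr, List.mem_cons]
    · by_cases hij : i = j
      · subst hij; simp [hr, Function.update_self]
      · simp [hr, hij, Function.update_of_ne hij, List.mem_cons]

lemma countP_bigTree (C : (i : Fin k) → OT Gs i) (i' : Fin k) (l : List (Fin k))
    (acc : (i : Fin k) → (Gs i).Out) (F : (q : ProdQ Gs) → ProdAns Gs q) :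
    (bigTree Gs C l acc).countP (fun q => q.1 = i') F ≤
      (l.map fun i => if i = i' then (C i').depth else 0).sum := by
  induction l generalizing acc with
  | nil => simp [bigTree, UT.countP]
  | cons j rest ih =>
    simp only [bigTree, UT.countP_seq, List.map_cons, List.sum_cons]
    have h2 := ih (Function.update acc j ((ownEmbed Gs j (C j)).run F))
    by_cases hj : j = i'
    · subst hj
      have h1 := countP_ownEmbed_le Gs j j (C j) F
      simp only [if_pos rfl, if_true]
      omega
    · have h1 := countP_ownEmbed_ne Gs j i' hj (C j) F
      simp only [if_neg hj]
      omega


/-! ### the core inductive statement -/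

def N0 (j : Fin k) : Fin (Gs j).N := ⟨0, (Gs j).hN⟩

/-- conditioning constraint at oracle `j`, relative to the plan `pos`. -/
def pcond (pos : (j : Fin k) → Option (Fin (Gs j).M)) (j : Fin k)
    (β : Fin (Gs j).N) (g : Orc Gs j) : Prop :=
  (pos j).elim (β = N0 Gs j) (fun v => g v = β)

/-- conclusion of the main lemma. -/
def Concl (w : (i : Fin k) → Orc Gs i → ℝ≥0∞) (A : (i : Fin k) → JT Gs i) : Prop :=
  ∃ C : (i : Fin k) → OT Gs i,
    (∀ i, (C i).depth ≤ (A i).depth) ∧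
    (∀ i e, A i = .ret e → C i = .ret e) ∧
    lhs Gs w A ≤ ∏ i, val Gs i (w i) (C i)


lemma val_query (i : Fin k) (wi : Orc Gs i → ℝ≥0∞) (v : Fin (Gs i).M)
    (c : Fin (Gs i).N → OT Gs i) :
    val Gs i wi (.query v c) = ∑ β, val Gs i (fun g => wi g * ind (g v = β)) (c β) := by
  unfold val
  rw [Finset.sum_comm]
  refine Finset.sum_congr rfl fun g _ => ?_
  rw [Finset.sum_eq_single (g v)]
  · show _ = wi g * ind (g v = g v) * _
    rw [ind_of rfl, mul_one]
    rfl
  · intro β _ hβ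
    show wi g * ind (g v = β) * _ = 0
    rw [ind_of_not (fun h => hβ h.symm), mul_zero, zero_mul]
  · intro h; exact absurd (Finset.mem_univ _) h

lemma val_split (i : Fin k) (wi : Orc Gs i → ℝ≥0∞) (v : Fin (Gs i).M) (C : OT Gs i) :
    ∑ β, val Gs i (fun g => wi g * ind (g v = β)) C = val Gs i wi C := by
  unfold val
  rw [Finset.sum_comm]
  refine Finset.sum_congr rfl fun g _ => ?_
  rw [Finset.sum_eq_single (g v)]
  · show wi g * ind (g v = g v) * _ = _
    rw [ind_of rfl, mul_one]
  · intro β _ hβ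
    show wi g * ind (g v = β) * _ = 0
    rw [ind_of_not (fun h => hβ h.symm), mul_zero, zero_mul]
  · intro h; exact absurd (Finset.mem_univ _) h

lemma step (w : (i : Fin k) → Orc Gs i → ℝ≥0∞) (A : (i : Fin k) → JT Gs i)
    (adv : Finset (Fin k)) (hne : adv.Nonempty)
    (tgt : Fin k → Fin k) (uL : (l : Fin k) → Fin (Gs (tgt l)).M)
    (contL : (l : Fin k) → Fin (Gs (tgt l)).N → JT Gs l)
    (pos : (j : Fin k) → Option (Fin (Gs j).M))
    (hC1 : ∀ l ∈ adv, A l = .query ⟨tgt l, uL l⟩ (contL l))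
    (hC2 : ∀ l ∈ adv, pos (tgt l) = some (uL l))
    (hC4 : ∀ j v, pos j = some v → j ∈ adv ∨ ∃ e, A j = .ret e)
    (IH : ∀ (w' : (i : Fin k) → Orc Gs i → ℝ≥0∞) (A' : (i : Fin k) → JT Gs i),
      (∑ i, (A' i).size) < (∑ i, (A i).size) → Concl Gs w' A') :
    Concl Gs w A := by
  classical
  -- split weights
  set W2 : (j : Fin k) → Fin (Gs j).N → Orc Gs j → ℝ≥0∞ :=
    fun j β g => w j g * ind (pcond Gs pos j β g) with hW2
  -- advanced trees
  set A' : ((j : Fin k) → Fin (Gs j).N) → (l : Fin k) → JT Gs l :=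
    fun b l => if l ∈ adv then contL l (b (tgt l)) else A l with hA'
  -- the unique matching split index
  set b0 : ((i : Fin k) → Orc Gs i) → (j : Fin k) → Fin (Gs j).N :=
    fun f j => (pos j).elim (N0 Gs j) (fun v => f j v) with hb0
  -- partition identity
  have hpart : lhs Gs w A =
      ∑ b : (j : Fin k) → Fin (Gs j).N, lhs Gs (fun j => W2 j (b j)) (A' b) := by
    unfold lhs
    rw [Finset.sum_comm]
    refine Finset.sum_congr rfl fun f _ => ?_
    rw [Finset.sum_eq_single (b0 f)]
    · -- the b0 term equals the original term
      have h1 : (∏ j, W2 j (b0 f j) (f j)) = ∏ j, w j (f j) := by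
        refine Finset.prod_congr rfl fun j _ => ?_
        have : pcond Gs pos j (b0 f j) (f j) := by
          simp only [pcond, hb0]
          cases hp : pos j <;> simp [hp]
        rw [hW2]; simp only
        rw [ind_of this, mul_one]
      have h2 : ∀ i, (A' (b0 f) i).run (jointOracle f) = (A i).run (jointOracle f) := by
        intro i
        by_cases hi : i ∈ adv
        · have := hC1 i hi
          rw [hA']; simp only [if_pos hi]
          rw [this]
          have hb : b0 f (tgt i) = f (tgt i) (uL i) := by
            simp only [hb0, hC2 i hi, Option.elim]
          rw [hb]
          rfl
        · rw [hA']; simp only [if_neg hi]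
      rw [h1]
      congr 1
      exact Finset.prod_congr rfl fun i _ => by rw [h2]
    · -- other terms vanish
      intro b _ hb
      have : ∃ j, b j ≠ b0 f j := by
        by_contra hc; push_neg at hc; exact hb (funext hc)
      obtain ⟨j, hj⟩ := this
      have hz : W2 j (b j) (f j) = 0 := by
        have : ¬ pcond Gs pos j (b j) (f j) := by
          simp only [pcond]
          cases hp : pos j with
          | none =>
            simp only [Option.elim]
            intro h
            exact hj (by simp [hb0, hp, h])
          | some v =>
            simp only [Option.elim]
            intro h
            exact hj (by simp [hb0, hp, ← h])
        rw [hW2]; simp only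
        rw [ind_of_not this, mul_zero]
      rw [Finset.prod_eq_zero (Finset.mem_univ j) hz, zero_mul]
    · intro h; exact absurd (Finset.mem_univ _) h
  -- sizes decrease
  have hsize : ∀ b, (∑ i, ((A' b) i).size) < ∑ i, (A i).size := by
    intro b
    obtain ⟨i0, hi0⟩ := hne
    refine Finset.sum_lt_sum (fun i _ => ?_) ⟨i0, Finset.mem_univ i0, ?_⟩
    · by_cases hi : i ∈ adv
      · rw [hA']; simp only [if_pos hi]
        rw [hC1 i hi]
        exact le_of_lt (UT.size_cont_lt (Q := ProdQ Gs) (Ans := ProdAns Gs)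
          ⟨tgt i, uL i⟩ (contL i) (b (tgt i)))
      · rw [hA']; simp only [if_neg hi]
        exact le_rfl
    · rw [hA']; simp only [if_pos hi0]
      rw [hC1 i0 hi0]
      exact UT.size_cont_lt (Q := ProdQ Gs) (Ans := ProdAns Gs)
        ⟨tgt i0, uL i0⟩ (contL i0) (b (tgt i0))
  -- apply IH to every piece
  have hIH : ∀ b, Concl Gs (fun j => W2 j (b j)) (A' b) := fun b => IH _ _ (hsize b)
  choose Cb hdep hret hle using hIH
  -- maximizers
  have hmax : ∀ (i : Fin k) (β : Fin (Gs i).N), ∃ b : (j : Fin k) → Fin (Gs j).N,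
      ∀ b', val Gs i (W2 i β) (Cb b' i) ≤ val Gs i (W2 i β) (Cb b i) := by
    intro i β
    obtain ⟨b, _, hbmax⟩ := Finset.exists_max_image Finset.univ
      (fun b : (j : Fin k) → Fin (Gs j).N => val Gs i (W2 i β) (Cb b i)) ⟨fun j => N0 Gs j, Finset.mem_univ _⟩
    exact ⟨b, fun b' => hbmax b' (Finset.mem_univ _)⟩
  choose bmax hbmax using hmax
  set g : (i : Fin k) → Fin (Gs i).N → ℝ≥0∞ :=
    fun i β => val Gs i (W2 i β) (Cb (bmax i β) i) with hg
  -- per-game combination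
  -- depth of advanced trees
  have hdepA' : ∀ (b : (j : Fin k) → Fin (Gs j).N) (i : Fin k),
      ((A' b) i).depth ≤ (A i).depth := by
    intro b i
    by_cases hi : i ∈ adv
    · rw [hA']; simp only [if_pos hi]
      rw [hC1 i hi]
      have := UT.depth_cont_le (Q := ProdQ Gs) (Ans := ProdAns Gs)
        ⟨tgt i, uL i⟩ (contL i) (b (tgt i))
      omega
    · rw [hA']; simp only [if_neg hi]
      exact le_rfl
  have hnotadv : ∀ i e, A i = .ret e → i ∉ adv := by
    intro i e he hi
    exact nomatch ((hC1 i hi).symm.trans he)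
  have hretA' : ∀ (b : (j : Fin k) → Fin (Gs j).N) (i : Fin k) (e : (Gs i).Out),
      A i = .ret e → (A' b) i = .ret e := by
    intro b i e he
    rw [hA']; simp only [if_neg (hnotadv i e he)]
    exact he
  have hcomb : ∀ i : Fin k, ∃ C : OT Gs i,
      C.depth ≤ (A i).depth ∧ (∀ e, A i = .ret e → C = .ret e) ∧
      (∑ β, g i β) ≤ val Gs i (w i) C := by
    intro i
    cases hp : pos i with
    | none =>
      have hW2none : ∀ β g', W2 i β g' = w i g' * ind (β = N0 Gs i) := by
        intro β g'
        rw [hW2]; simp only [pcond, hp, Option.elim]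
      refine ⟨Cb (bmax i (N0 Gs i)) i, ?_, ?_, ?_⟩
      · exact le_trans (hdep _ i) (hdepA' _ i)
      · intro e he
        exact hret _ i e (hretA' _ i e he)
      · have hsum : (∑ β, g i β) = g i (N0 Gs i) := by
          refine Finset.sum_eq_single (N0 Gs i) (fun β _ hβ => ?_) (fun h => absurd (Finset.mem_univ _) h)
          rw [hg]; simp only
          unfold val
          refine Finset.sum_eq_zero fun g' _ => ?_
          rw [hW2none, ind_of_not hβ, mul_zero, zero_mul]
        rw [hsum, hg]; simp only
        apply le_of_eq
        unfold val
        refine Finset.sum_congr rfl fun g' _ => ?_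
        rw [hW2none, ind_of rfl, mul_one]
    | some v =>
      have hW2some : ∀ β, W2 i β = fun g' => w i g' * ind (g' v = β) := by
        intro β; funext g'
        rw [hW2]; simp only [pcond, hp, Option.elim]
      by_cases hi : i ∈ adv
      · refine ⟨.query v (fun β => Cb (bmax i β) i), ?_, ?_, ?_⟩
        · -- depth bound
          have hper : ∀ β, (Cb (bmax i β) i).depth + 1 ≤ (A i).depth := by
            intro β
            have h1 := hdep (bmax i β) i
            have h2 : ((A' (bmax i β)) i).depth + 1 ≤ (A i).depth := by
              rw [hA']; simp only [if_pos hi]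
              rw [hC1 i hi]
              exact UT.depth_cont_le (Q := ProdQ Gs) (Ans := ProdAns Gs)
                ⟨tgt i, uL i⟩ (contL i) (bmax i β (tgt i))
            omega
          have h0 : 1 ≤ (A i).depth := le_trans (by omega) (hper (N0 Gs i))
          have hsup : (Finset.univ.sup fun β => (Cb (bmax i β) i).depth) ≤ (A i).depth - 1 := by
            refine Finset.sup_le fun β _ => ?_
            have := hper β
            omega
          show (Finset.univ.sup fun β => (Cb (bmax i β) i).depth) + 1 ≤ (A i).depth
          omega
        · intro e he
          exact absurd he (fun he => (hnotadv i e he) hi)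
        · rw [val_query]
          apply le_of_eq
          refine Finset.sum_congr rfl fun β _ => ?_
          rw [hg]; simp only
          rw [hW2some]
      · obtain ⟨e, he⟩ := (hC4 i v hp).resolve_left hi
        refine ⟨.ret e, ?_, ?_, ?_⟩
        · rw [he]; simp [UT.depth]
        · intro e' he'
          have : e = e' := by
            have := he.symm.trans he'
            exact (UT.ret.injEq _ _).mp this
          rw [this]
        · have hCb : ∀ β, Cb (bmax i β) i = .ret e := fun β =>
            hret _ i e (hretA' _ i e he)
          have : (∑ β, g i β) = ∑ β, val Gs i (fun g' => w i g' * ind (g' v = β)) (.ret e) := by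
            refine Finset.sum_congr rfl fun β _ => ?_
            rw [hg]; simp only
            rw [hCb β, hW2some]
          rw [this, val_split]
  choose Cstar hds hrs hvs using hcomb
  refine ⟨Cstar, hds, (fun i e he => hrs i e he), ?_⟩
  calc lhs Gs w A = ∑ b, lhs Gs (fun j => W2 j (b j)) (A' b) := hpart
    _ ≤ ∑ b, ∏ i, val Gs i (W2 i (b i)) (Cb b i) := Finset.sum_le_sum fun b _ => hle b
    _ ≤ ∑ b : (j : Fin k) → Fin (Gs j).N, ∏ i, g i (b i) := by
        refine Finset.sum_le_sum fun b _ => Finset.prod_le_prod' fun i _ => ?_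
        exact hbmax i (b i) b
    _ = ∏ i, ∑ β, g i β := by
        rw [Finset.prod_univ_sum (fun i => Finset.univ) g, Fintype.piFinset_univ]
    _ ≤ ∏ i, val Gs i (w i) (Cstar i) := Finset.prod_le_prod' fun i _ => hvs i


/-! ### root data of the trees -/

def pd (A : (i : Fin k) → JT Gs i) (l : Fin k) :
    Option (Σ j : Fin k, Fin (Gs j).M × (Fin (Gs j).N → JT Gs l)) :=
  match A l with
  | .ret _ => none
  | .query q c => some ⟨q.1, q.2, c⟩

def planAt (A : (i : Fin k) → JT Gs i) (l : Fin k) :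
    Σ j : Fin k, Fin (Gs j).M × (Fin (Gs j).N → JT Gs l) :=
  (pd Gs A l).getD ⟨l, ⟨0, (Gs l).hM⟩, fun _ => A l⟩

def tgtp (A : (i : Fin k) → JT Gs i) (l : Fin k) : Fin k := (planAt Gs A l).1

def uLp (A : (i : Fin k) → JT Gs i) (l : Fin k) : Fin (Gs (tgtp Gs A l)).M :=
  (planAt Gs A l).2.1

def contLp (A : (i : Fin k) → JT Gs i) (l : Fin k) :
    Fin (Gs (tgtp Gs A l)).N → JT Gs l := (planAt Gs A l).2.2

lemma hQroot (A : (i : Fin k) → JT Gs i) (l : Fin k) (hl : (pd Gs A l).isSome) :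
    A l = .query ⟨tgtp Gs A l, uLp Gs A l⟩ (contLp Gs A l) := by
  cases hA : A l with
  | ret o =>
    exfalso
    rw [pd, hA] at hl
    simp at hl
  | query q c =>
    obtain ⟨j, v⟩ := q
    have hpd : pd Gs A l = some ⟨j, v, c⟩ := by rw [pd, hA]
    have hplan : planAt Gs A l = ⟨j, v, c⟩ := by rw [planAt, hpd]; rfl
    show UT.query (⟨j, v⟩ : ProdQ Gs) c =
      UT.query (⟨(planAt Gs A l).1, (planAt Gs A l).2.1⟩ : ProdQ Gs) (planAt Gs A l).2.2
    rw [hplan]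

lemma hRetroot (A : (i : Fin k) → JT Gs i) (l : Fin k) (hl : ¬ (pd Gs A l).isSome) :
    ∃ e, A l = .ret e := by
  cases hA : A l with
  | ret o => exact ⟨o, rfl⟩
  | query q c =>
    exfalso
    rw [pd, hA] at hl
    simp at hl

lemma cast_uLp (A : (i : Fin k) → JT Gs i) (l l' : Fin k) (hll : l' = l)
    (h : tgtp Gs A l' = tgtp Gs A l) :
    Fin.cast (congrArg (fun z => (Gs z).M) h) (uLp Gs A l') = uLp Gs A l := by
  subst hll
  rfl

lemma buildPlan (w : (i : Fin k) → Orc Gs i → ℝ≥0∞) (A : (i : Fin k) → JT Gs i)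
    (adv : Finset (Fin k)) (hne : adv.Nonempty)
    (hadv : ∀ l ∈ adv, (pd Gs A l).isSome)
    (hinj : ∀ l ∈ adv, ∀ l' ∈ adv, tgtp Gs A l = tgtp Gs A l' → l = l')
    (hP3 : ∀ l ∈ adv, tgtp Gs A l ∈ adv ∨ ¬ (pd Gs A (tgtp Gs A l)).isSome)
    (IH : ∀ (w' : (i : Fin k) → Orc Gs i → ℝ≥0∞) (A' : (i : Fin k) → JT Gs i),
      (∑ i, (A' i).size) < (∑ i, (A i).size) → Concl Gs w' A') :
    Concl Gs w A := by
  classical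
  set pos : (j : Fin k) → Option (Fin (Gs j).M) :=
    fun j => if h : ∃ l, l ∈ adv ∧ tgtp Gs A l = j
      then some (Fin.cast (congrArg (fun z => (Gs z).M) h.choose_spec.2) (uLp Gs A h.choose))
      else none with hpos
  refine step Gs w A adv hne (tgtp Gs A) (uLp Gs A) (contLp Gs A) pos ?_ ?_ ?_ IH
  · intro l hl
    exact hQroot Gs A l (hadv l hl)
  · intro l hl
    have hex : ∃ l', l' ∈ adv ∧ tgtp Gs A l' = tgtp Gs A l := ⟨l, hl, rfl⟩
    rw [hpos]
    simp only [dif_pos hex]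
    have hcl : hex.choose = l :=
      hinj _ hex.choose_spec.1 _ hl hex.choose_spec.2
    exact congrArg some (cast_uLp Gs A l hex.choose hcl hex.choose_spec.2)
  · intro j v hj
    rw [hpos] at hj
    by_cases hex : ∃ l, l ∈ adv ∧ tgtp Gs A l = j
    · rcases hP3 hex.choose hex.choose_spec.1 with h | h
      · left; rw [← hex.choose_spec.2]; exact h
      · right
        rw [← hex.choose_spec.2]
        exact hRetroot Gs A _ h
    · simp only [dif_neg hex] at hj
      exact absurd hj (by simp)

/-! ### the main lemma -/

theorem main : ∀ (n : ℕ) (w : (i : Fin k) → Orc Gs i → ℝ≥0∞) (A : (i : Fin k) → JT Gs i),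
    (∑ i, (A i).size) = n → Concl Gs w A := by
  intro n
  induction n using Nat.strong_induction_on with
  | _ n IH =>
  intro w A hn
  have IH' : ∀ (w' : (i : Fin k) → Orc Gs i → ℝ≥0∞) (A' : (i : Fin k) → JT Gs i),
      (∑ i, (A' i).size) < (∑ i, (A i).size) → Concl Gs w' A' := by
    intro w' A' h
    exact IH _ (hn ▸ h) w' A' rfl
  by_cases hall : ∀ i, ∃ e, A i = UT.ret e
  · -- base case : all trees are leaves
    choose e he using hall
    refine ⟨fun i => .ret (e i), fun i => by rw [he i]; exact le_rfl, ?_, ?_⟩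
    · intro i e' he'
      have : e i = e' := (UT.ret.injEq _ _).mp ((he i).symm.trans he')
      show UT.ret (e i) = UT.ret e'
      rw [this]
    · apply le_of_eq
      unfold lhs
      have h1 : ∀ f : (i : Fin k) → Orc Gs i,
          (∏ j, w j (f j)) * (∏ i, ind ((A i).run (jointOracle f) ∈ (Gs i).R (f i)))
          = ∏ j, (w j (f j) * ind (e j ∈ (Gs j).R (f j))) := by
        intro f
        rw [← Finset.prod_mul_distrib]
        refine Finset.prod_congr rfl fun j _ => ?_
        rw [he j]
        rfl
      rw [Finset.sum_congr rfl (fun f _ => h1 f)]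
      have h2 := (Finset.prod_univ_sum (fun i : Fin k => (Finset.univ : Finset (Orc Gs i)))
        (fun j gj => w j gj * ind (e j ∈ (Gs j).R gj))).symm
      rw [Fintype.piFinset_univ] at h2
      rw [h2]
      rfl
  · -- inductive case : some tree has a root query
    obtain ⟨i0, hi0⟩ := not_forall.mp hall
    have hD0 : (pd Gs A i0).isSome := by
      by_contra h
      exact hi0 (hRetroot Gs A i0 h)
    set tA := tgtp Gs A with htA
    by_cases hexit : ∃ i, (pd Gs A i).isSome ∧ ¬ (pd Gs A (tA i)).isSome
    · obtain ⟨i, hi, hti⟩ := hexit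
      refine buildPlan Gs w A {i} ⟨i, Finset.mem_singleton_self i⟩ ?_ ?_ ?_ IH'
      · intro l hl
        rw [Finset.mem_singleton.mp hl]
        exact hi
      · intro l hl l' hl' _
        rw [Finset.mem_singleton.mp hl, Finset.mem_singleton.mp hl']
      · intro l hl
        rw [Finset.mem_singleton.mp hl]
        right
        exact hti
    · push_neg at hexit
      have hiter : ∀ m, (pd Gs A (tA^[m] i0)).isSome := by
        intro m
        induction m with
        | zero => exact hD0
        | succ m ihm =>
          rw [Function.iterate_succ_apply']
          exact hexit _ ihm
      have key : ∃ a b : ℕ, a < b ∧ tA^[a] i0 = tA^[b] i0 := by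
        obtain ⟨m₁, m₂, hne', heq⟩ := Fintype.exists_ne_map_eq_of_card_lt
          (fun m : Fin (k+1) => tA^[m.val] i0) (by simp)
        rcases lt_or_gt_of_ne (fun h : (m₁ : ℕ) = (m₂ : ℕ) => hne' (Fin.ext h)) with h | h
        · exact ⟨m₁, m₂, h, heq⟩
        · exact ⟨m₂, m₁, h, heq.symm⟩
      obtain ⟨a, b, hab, hiterEq⟩ := key
      set x := tA^[a] i0 with hx
      have hper : Function.IsPeriodicPt tA (b - a) x := by
        show tA^[b-a] x = x
        rw [hx, ← Function.iterate_add_apply]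
        have : b - a + a = b := by omega
        rw [this]
        exact hiterEq.symm
      set r := Function.minimalPeriod tA x with hr
      have hr0 : 0 < r := hper.minimalPeriod_pos (by omega)
      have hrx : tA^[r] x = x := Function.isPeriodicPt_minimalPeriod tA x
      have hinjIter := Function.iterate_injOn_Iio_minimalPeriod (f := tA) (x := x)
      refine buildPlan Gs w A ((Finset.range r).image (fun t => tA^[t] x))
        ⟨x, Finset.mem_image.mpr ⟨0, Finset.mem_range.mpr hr0, rfl⟩⟩ ?_ ?_ ?_ IH'
      · intro l hl
        obtain ⟨t, _, hteq⟩ := Finset.mem_image.mp hl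
        rw [← hteq, hx, ← Function.iterate_add_apply]
        exact hiter _
      · intro l hl l' hl' hteq
        obtain ⟨s, hs, hseq⟩ := Finset.mem_image.mp hl
        obtain ⟨t, ht, hteq'⟩ := Finset.mem_image.mp hl'
        rw [Finset.mem_range] at hs ht
        rw [← hseq, ← hteq']
        rw [← hseq, ← hteq'] at hteq
        have hst : tA^[s+1] x = tA^[t+1] x := by
          rw [Function.iterate_succ_apply', Function.iterate_succ_apply']
          exact hteq
        have hmod : (s+1) % r = (t+1) % r := by
          refine hinjIter ?_ ?_ ?_
          · exact Set.mem_Iio.mpr (Nat.mod_lt _ hr0)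
          · exact Set.mem_Iio.mpr (Nat.mod_lt _ hr0)
          · show tA^[(s+1) % r] x = tA^[(t+1) % r] x
            rw [Function.iterate_mod_minimalPeriod_eq, Function.iterate_mod_minimalPeriod_eq]
            exact hst
        have hseqt : s = t := by
          by_cases hs1 : s + 1 < r
          · by_cases ht1 : t + 1 < r
            · rw [Nat.mod_eq_of_lt hs1, Nat.mod_eq_of_lt ht1] at hmod
              omega
            · have ht1' : t + 1 = r := by omega
              rw [Nat.mod_eq_of_lt hs1, ht1', Nat.mod_self] at hmod
              omega
          · have hs1' : s + 1 = r := by omega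
            by_cases ht1 : t + 1 < r
            · rw [hs1', Nat.mod_self, Nat.mod_eq_of_lt ht1] at hmod
              omega
            · have ht1' : t + 1 = r := by omega
              omega
        rw [hseqt]
      · intro l hl
        left
        obtain ⟨t, ht, hteq⟩ := Finset.mem_image.mp hl
        rw [Finset.mem_range] at ht
        rw [← hteq, ← htA]
        have : tA (tA^[t] x) = tA^[t+1] x := (Function.iterate_succ_apply' tA t x).symm
        rw [this]
        by_cases ht1 : t + 1 < r
        · exact Finset.mem_image.mpr ⟨t+1, Finset.mem_range.mpr ht1, rfl⟩
        · have : t + 1 = r := by omega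
          rw [this, hrx]
          exact Finset.mem_image.mpr ⟨0, Finset.mem_range.mpr hr0, rfl⟩

end MF
end

/-- Reduction from memoryless to fair algorithms: for every
`(T 0, …, T (k-1))`-memoryless algorithm `A` for the direct product
`G 0 × ⋯ × G (k-1)` there is a `(T 0, …, T (k-1))`-fair algorithm whose winning
probability is at least that of `A`. -/
theorem memoryless_to_fair {k : ℕ} (Gs : Fin k → PlainGame) (T : Fin k → ℕ)
    (A : (i : Fin k) → DT (ProdQ Gs) (ProdAns Gs) (Gs i).Out (T i)) :
    ∃ (B : ℕ) (Bfair : DT (ProdQ Gs) (ProdAns Gs) ((i : Fin k) → (Gs i).Out) B),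
      IsFair T Bfair ∧ memorylessWinProb Gs A ≤ jointWinProb Gs Bfair := by

  classical
  obtain ⟨C, hdep, -, hle⟩ := MF.main Gs (∑ i, ((A i).toUT).size)
    (fun i => ((Gs i).μ : (Fin (Gs i).M → Fin (Gs i).N) → ℝ≥0∞)) (fun i => (A i).toUT) rfl
  have hdT : ∀ i, (C i).depth ≤ T i := fun i => le_trans (hdep i) (DT.depth_toUT (A i))
  set acc : (i : Fin k) → (Gs i).Out :=
    fun i => (A i).run (fun q => ⟨0, (Gs q.1).hN⟩) with hacc
  set BT := MF.bigTree Gs C (List.finRange k) acc with hBT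
  refine ⟨BT.depth, BT.toDT BT.depth le_rfl, ?_, ?_⟩
  · -- fairness
    intro f i
    rw [UT.countP_toDT]
    calc BT.countP (fun q => q.1 = i) (jointOracle f)
        ≤ ((List.finRange k).map fun j => if j = i then (C i).depth else 0).sum :=
          MF.countP_bigTree Gs C i (List.finRange k) acc (jointOracle f)
      _ = ∑ j : Fin k, (if j = i then (C i).depth else 0) := (Fin.sum_univ_def _).symm
      _ = (C i).depth := by simp
      _ ≤ T i := hdT i
  · -- winning probability
    unfold memorylessWinProb jointWinProb
    rw [tsum_fintype, tsum_fintype]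
    have hL : (∑ f : (i : Fin k) → Fin (Gs i).M → Fin (Gs i).N,
        (∏ i, (Gs i).μ (f i)) * ind (∀ i, (A i).run (jointOracle f) ∈ (Gs i).R (f i)))
        = MF.lhs Gs (fun i => ((Gs i).μ : (Fin (Gs i).M → Fin (Gs i).N) → ℝ≥0∞))
            (fun i => (A i).toUT) := by
      unfold MF.lhs
      refine Finset.sum_congr rfl fun f _ => ?_
      rw [ind_forall]
      congr 1
      refine Finset.prod_congr rfl fun i _ => ?_
      rw [DT.run_toUT]
    have hR : (∑ f : (i : Fin k) → Fin (Gs i).M → Fin (Gs i).N,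
        (∏ i, (Gs i).μ (f i)) *
          ind (∀ i, (BT.toDT BT.depth le_rfl).run (jointOracle f) i ∈ (Gs i).R (f i)))
        = ∏ i, MF.val Gs i ((Gs i).μ : (Fin (Gs i).M → Fin (Gs i).N) → ℝ≥0∞) (C i) := by
      have hrun : ∀ (f : (i : Fin k) → Fin (Gs i).M → Fin (Gs i).N) (i : Fin k),
          (BT.toDT BT.depth le_rfl).run (jointOracle f) i = (C i).run (f i) := by
        intro f i
        rw [UT.run_toDT, hBT, MF.run_bigTree]
        rw [if_pos (List.mem_finRange i)]
        rfl
      have h1 : ∀ f : (i : Fin k) → Fin (Gs i).M → Fin (Gs i).N,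
          (∏ i, (Gs i).μ (f i)) *
            ind (∀ i, (BT.toDT BT.depth le_rfl).run (jointOracle f) i ∈ (Gs i).R (f i))
          = ∏ i, ((Gs i).μ (f i) * ind ((C i).run (f i) ∈ (Gs i).R (f i))) := by
        intro f
        rw [ind_forall, ← Finset.prod_mul_distrib]
        refine Finset.prod_congr rfl fun i _ => ?_
        rw [hrun f i]
      rw [Finset.sum_congr rfl (fun f _ => h1 f)]
      have h2 := (Finset.prod_univ_sum
        (fun i : Fin k => (Finset.univ : Finset (Fin (Gs i).M → Fin (Gs i).N)))
        (fun i g => (Gs i).μ g * ind ((C i).run g ∈ (Gs i).R g))).symm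
      rw [Fintype.piFinset_univ] at h2
      rw [h2]
      rfl
    rw [hL, hR]
    exact hle
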